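/- The time-t flow map of H_A(p,x,q,y) = H(p,y), given by (p,x,q,y) ↦ (p, x - t·H_q(p,y), q + t·H_p(p,y), y), is symplectic for the extended form dp∧dq + dx∧dy, provided H is C². -/

import Mathlib

open scoped BigOperators

/-- Vectors in `ℝ^d`. -/
abbrev V (d : ℕ) := Fin d → ℝ

/-- The extended symplectic form `dp ∧ dq + dx ∧ dy` on `ℝ^{4d}`,
coordinates ordered `(p, x, q, y)`. -/
def ω4 (d : ℕ) (u v : V d × V d × V d × V d) : ℝ :=
  ∑ i, (u.1 i * v.2.2.1 i - u.2.2.1 i * v.1 i) +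
    ∑ i, (u.2.1 i * v.2.2.2 i - u.2.2.2 i * v.2.1 i)

/-- Partial gradient of `H(p,q)` with respect to `p`. -/
noncomputable def Hgradp (d : ℕ) (H : V d × V d → ℝ) (z : V d × V d) : V d :=
  fun i => fderiv ℝ H z (Pi.single i 1, 0)

/-- Partial gradient of `H(p,q)` with respect to `q`. -/
noncomputable def Hgradq (d : ℕ) (H : V d × V d → ℝ) (z : V d × V d) : V d :=
  fun i => fderiv ℝ H z (0, Pi.single i 1)

/-- The time-`t` flow map of `H_A(p,x,q,y) = H(p,y)`:
`(p, x, q, y) ↦ (p, x - t H_q(p,y), q + t H_p(p,y), y)`. -/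
noncomputable def ΦA (d : ℕ) (H : V d × V d → ℝ) (t : ℝ)
    (z : V d × V d × V d × V d) : V d × V d × V d × V d :=
  (z.1, z.2.1 - t • Hgradq d H (z.1, z.2.2.2),
    z.2.2.1 + t • Hgradp d H (z.1, z.2.2.2), z.2.2.2)

/-- decomposition of a continuous linear functional on `V d × V d` along the basis -/
lemma clm_expand (d : ℕ) (φ : (V d × V d) →L[ℝ] ℝ) (a b : V d) :
    φ (a, b) = ∑ i, a i * φ (Pi.single i 1, 0) + ∑ i, b i * φ (0, Pi.single i 1) := by
  have h : (a, b) = ∑ i, (a i • ((Pi.single i 1 : V d), (0 : V d)) +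
      b i • ((0:V d), (Pi.single i 1 : V d))) := by
    rw [Finset.sum_add_distrib]
    ext j <;>
      simp [Prod.fst_sum, Prod.snd_sum, Finset.sum_apply, Pi.single_apply, mul_ite,
        Finset.sum_ite_eq', Finset.sum_ite_eq]
  rw [h, map_sum, ← Finset.sum_add_distrib]
  refine Finset.sum_congr rfl fun i _ => ?_
  rw [map_add, map_smul, map_smul]; simp

/-- The time-`t` flow map of `H_A(p,x,q,y) = H(p,y)` is symplectic for the
extended symplectic form, provided `H` is `C²`. -/
theorem stmt12 (d : ℕ) (H : V d × V d → ℝ) (hH : ContDiff ℝ 2 H) (t : ℝ) :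
    ∀ z u v, ω4 d (fderiv ℝ (ΦA d H t) z u) (fderiv ℝ (ΦA d H t) z v) =
      ω4 d u v := by
  intro z u v
  have hF : ContDiff ℝ 1 (fderiv ℝ H) := hH.fderiv_right (by norm_num)
  -- second derivative at the relevant point
  set K := fderiv ℝ (fderiv ℝ H) (z.1, z.2.2.2) with hKdef
  have hK : HasFDerivAt (fderiv ℝ H) K (z.1, z.2.2.2) :=
    ((hF.differentiable one_ne_zero) _).hasFDerivAt
  have hsymm : ∀ a b, K a b = K b a := fun a b =>
    second_derivative_symmetric (fun y => ((hH.differentiable (by norm_num)) y).hasFDerivAt) hK a b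
  -- gradient derivatives
  have hgp : HasFDerivAt (Hgradp d H)
      (ContinuousLinearMap.pi fun i =>
        (ContinuousLinearMap.apply ℝ ℝ ((Pi.single i 1 : V d), (0:V d))).comp K)
      (z.1, z.2.2.2) :=
    hasFDerivAt_pi.2 fun i =>
      (ContinuousLinearMap.apply ℝ ℝ ((Pi.single i 1 : V d), (0:V d))).hasFDerivAt.comp _ hK
  have hgq : HasFDerivAt (Hgradq d H)
      (ContinuousLinearMap.pi fun i =>
        (ContinuousLinearMap.apply ℝ ℝ ((0:V d), (Pi.single i 1 : V d))).comp K)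
      (z.1, z.2.2.2) :=
    hasFDerivAt_pi.2 fun i =>
      (ContinuousLinearMap.apply ℝ ℝ ((0:V d), (Pi.single i 1 : V d))).hasFDerivAt.comp _ hK
  -- projections
  set Pp : (V d × V d × V d × V d) →L[ℝ] V d :=
    ContinuousLinearMap.fst ℝ (V d) (V d × V d × V d) with hPp
  set P2 : (V d × V d × V d × V d) →L[ℝ] (V d × V d × V d) :=
    ContinuousLinearMap.snd ℝ (V d) (V d × V d × V d) with hP2
  set Px : (V d × V d × V d × V d) →L[ℝ] V d :=
    (ContinuousLinearMap.fst ℝ (V d) (V d × V d)).comp P2 with hPx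
  set P3 : (V d × V d × V d × V d) →L[ℝ] (V d × V d) :=
    (ContinuousLinearMap.snd ℝ (V d) (V d × V d)).comp P2 with hP3
  set Pq : (V d × V d × V d × V d) →L[ℝ] V d :=
    (ContinuousLinearMap.fst ℝ (V d) (V d)).comp P3 with hPq
  set Py : (V d × V d × V d × V d) →L[ℝ] V d :=
    (ContinuousLinearMap.snd ℝ (V d) (V d)).comp P3 with hPy
  set π : (V d × V d × V d × V d) →L[ℝ] (V d × V d) := Pp.prod Py with hπdef
  have hπ : HasFDerivAt (fun z : V d × V d × V d × V d => (z.1, z.2.2.2)) π z :=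
    π.hasFDerivAt
  set Gp := ContinuousLinearMap.pi fun i =>
      (ContinuousLinearMap.apply ℝ ℝ ((Pi.single i 1 : V d), (0:V d))).comp K with hGp
  set Gq := ContinuousLinearMap.pi fun i =>
      (ContinuousLinearMap.apply ℝ ℝ ((0:V d), (Pi.single i 1 : V d))).comp K with hGq
  set L := Pp.prod ((Px - t • (Gq.comp π)).prod ((Pq + t • (Gp.comp π)).prod Py)) with hLdef
  have hL : HasFDerivAt (ΦA d H t) L z := by
    have h1 : HasFDerivAt (fun z : V d × V d × V d × V d => z.1) Pp z := Pp.hasFDerivAt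
    have h2 : HasFDerivAt
        (fun z : V d × V d × V d × V d => z.2.1 - t • Hgradq d H (z.1, z.2.2.2))
        (Px - t • (Gq.comp π)) z :=
      Px.hasFDerivAt.sub ((hgq.comp z hπ).const_smul t)
    have h3 : HasFDerivAt
        (fun z : V d × V d × V d × V d => z.2.2.1 + t • Hgradp d H (z.1, z.2.2.2))
        (Pq + t • (Gp.comp π)) z :=
      Pq.hasFDerivAt.add ((hgp.comp z hπ).const_smul t)
    have h4 : HasFDerivAt (fun z : V d × V d × V d × V d => z.2.2.2) Py z := Py.hasFDerivAt
    exact HasFDerivAt.prodMk h1 (HasFDerivAt.prodMk h2 (HasFDerivAt.prodMk h3 h4))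
  rw [hL.fderiv]
  -- now a pure computation
  set A := K (u.1, u.2.2.2) with hA
  set B := K (v.1, v.2.2.2) with hB
  have hAB : B (u.1, u.2.2.2) = A (v.1, v.2.2.2) := hsymm _ _
  have hAe := clm_expand d A v.1 v.2.2.2
  have hBe := clm_expand d B u.1 u.2.2.2
  simp only [ω4, hLdef, ContinuousLinearMap.prod_apply, ContinuousLinearMap.coe_comp',
    ContinuousLinearMap.coe_sub', ContinuousLinearMap.coe_add', ContinuousLinearMap.coe_smul',
    Function.comp_apply, Pi.sub_apply, Pi.add_apply, Pi.smul_apply,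
    ContinuousLinearMap.pi_apply, ContinuousLinearMap.apply_apply, hPp, hPx, hPq, hPy, hP2, hP3,
    hπdef, hGp, hGq, ContinuousLinearMap.coe_fst', ContinuousLinearMap.coe_snd',
    smul_eq_mul, ← hA, ← hB]
  have h1 : ∑ i, (u.1 i * (v.2.2.1 i + t * B (Pi.single i 1, 0))
        - (u.2.2.1 i + t * A (Pi.single i 1, 0)) * v.1 i)
      = ∑ i, (u.1 i * v.2.2.1 i - u.2.2.1 i * v.1 i)
        + t * ∑ i, u.1 i * B (Pi.single i 1, 0)
        - t * ∑ i, v.1 i * A (Pi.single i 1, 0) := by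
    rw [Finset.mul_sum, Finset.mul_sum, sub_eq_add_neg, ← Finset.sum_neg_distrib,
      ← Finset.sum_add_distrib, ← Finset.sum_add_distrib]
    exact Finset.sum_congr rfl fun i _ => by ring
  have h2 : ∑ i, ((u.2.1 i - t * A (0, Pi.single i 1)) * v.2.2.2 i
        - u.2.2.2 i * (v.2.1 i - t * B (0, Pi.single i 1)))
      = ∑ i, (u.2.1 i * v.2.2.2 i - u.2.2.2 i * v.2.1 i)
        - t * ∑ i, v.2.2.2 i * A (0, Pi.single i 1)
        + t * ∑ i, u.2.2.2 i * B (0, Pi.single i 1) := by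
    rw [Finset.mul_sum, Finset.mul_sum, sub_eq_add_neg (∑ i, (u.2.1 i * v.2.2.2 i - u.2.2.2 i * v.2.1 i)),
      ← Finset.sum_neg_distrib, ← Finset.sum_add_distrib, ← Finset.sum_add_distrib]
    exact Finset.sum_congr rfl fun i _ => by ring
  rw [h1, h2]
  linear_combination t * hAe + t * hAB - t * hBe
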